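/- Let (X,d) be a proper geodesic metric space and Ω ⊊ X a bounded domain. Define u_∞(x) = inf{ u(x) : u is a locally Lipschitz positive function on Ω, continuous on cl(Ω), satisfying comparison with cones from below, |∇⁻u| ≥ Λ_∞·u in Ω, and u = 1 = max_{cl(Ω)} u on the high ridge M(Ω) }, where Λ_∞ = 1/R_∞, R_∞ = max_{x∈cl(Ω)} d(x,∂Ω), and M(Ω) = { x ∈ Ω : d(x,∂Ω) = R_∞ }. Then u_∞ is continuous on cl(Ω), satisfies 0 < u_∞ ≤ Λ_∞·d(·,∂Ω) in Ω (hence u_∞ = 0 on ∂Ω), u_∞ = 1 on M(Ω), and u_∞ satisfies comparison with cones from below and |∇⁻u_∞| ≥ Λ_∞·u_∞ in Ω. -/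

import Mathlib

open Metric Filter Set Topology

/-- A geodesic space: any two points are joined by an isometric copy of an interval. -/
def IsGeodesicSpace (X : Type*) [MetricSpace X] : Prop :=
  ∀ x y : X, ∃ γ : ℝ → X, γ 0 = x ∧ γ (dist x y) = y ∧ ∀ s t : ℝ, dist (γ s) (γ t) = |s - t|

/-- The subslope `|∇⁻ u|(x) = limsup_{y→x} max{u(x)-u(y),0}/d(x,y)`. -/
noncomputable def mSubslope {X : Type*} [MetricSpace X] (u : X → ℝ) (x : X) : ℝ :=
  Filter.limsup (fun y => max (u x - u y) 0 / dist x y) (𝓝[≠] x)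

/-- The slope `|∇ u|(x) = limsup_{y→x} |u(y)-u(x)|/d(x,y)`. -/
noncomputable def mSlope {X : Type*} [MetricSpace X] (u : X → ℝ) (x : X) : ℝ :=
  Filter.limsup (fun y => |u y - u x| / dist x y) (𝓝[≠] x)

/-- Comparison with cones from below in `Ω`: for every open `O` compactly contained in `Ω`,
apex `xhat ∈ Ω \ O`, `a ∈ ℝ`, `κ ≤ 0`, if `u ≥ a + κ d(xhat,·)` on `∂O` then the same holds on
the closure of `O`. -/
def CompCones {X : Type*} [MetricSpace X] (Ω : Set X) (u : X → ℝ) : Prop :=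
  ∀ O : Set X, IsOpen O → IsCompact (closure O) → closure O ⊆ Ω →
    ∀ xhat ∈ Ω \ O, ∀ a κ : ℝ, κ ≤ 0 →
      (∀ z ∈ frontier O, a + κ * dist xhat z ≤ u z) →
      ∀ z ∈ closure O, a + κ * dist xhat z ≤ u z

/-- Locally Lipschitz on a set. -/
def LocLipOn {X : Type*} [MetricSpace X] (s : Set X) (u : X → ℝ) : Prop :=
  ∀ x ∈ s, ∃ K : NNReal, ∃ t ∈ 𝓝[s] x, LipschitzOnWith K u t

section helpers
variable {X : Type*} [MetricSpace X]

lemma cb_subset (hgeo : IsGeodesicSpace X) {Ω : Set X} (hΩo : IsOpen Ω) {x : X} (hx : x ∈ Ω)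
    {ρ : ℝ} (hρ : ρ < infDist x (frontier Ω)) : closedBall x ρ ⊆ Ω := by
  rcases lt_or_ge ρ 0 with h | h
  · simp [closedBall_eq_empty.2 h]
  have hconn : IsPreconnected (closedBall x ρ) := by
    apply isPreconnected_of_forall x
    intro y hy
    obtain ⟨γ, h0, h1, hiso⟩ := hgeo x y
    have hcont : Continuous γ := by
      have : LipschitzWith 1 γ := LipschitzWith.of_dist_le_mul (fun s t => by
        rw [hiso s t]; simp [Real.dist_eq])
      exact this.continuous
    refine ⟨γ '' Icc 0 (dist x y), ?_, ⟨0, ⟨le_rfl, dist_nonneg⟩, h0⟩,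
      ⟨dist x y, ⟨dist_nonneg, le_rfl⟩, h1⟩, isPreconnected_Icc.image γ hcont.continuousOn⟩
    rintro _ ⟨t, ⟨ht0, ht1⟩, rfl⟩
    have : dist (γ t) x = t := by
      rw [← h0, hiso t 0]; simp [abs_of_nonneg ht0]
    rw [mem_closedBall, this]
    exact ht1.trans (mem_closedBall'.1 hy)
  have hsub : closedBall x ρ ⊆ Ω ∪ (closure Ω)ᶜ := by
    intro y hy
    by_cases hyc : y ∈ closure Ω
    · left
      by_contra hyΩ
      have hyf : y ∈ frontier Ω := by
        rw [hΩo.frontier_eq]; exact ⟨hyc, hyΩ⟩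
      have h1 : infDist x (frontier Ω) ≤ dist x y := infDist_le_dist_of_mem hyf
      have h2 : dist x y ≤ ρ := mem_closedBall'.1 hy
      linarith
    · right; exact hyc
  have := hconn.subset_left_of_subset_union hΩo isClosed_closure.isOpen_compl
    (disjoint_compl_right.mono_left subset_closure) hsub
    ⟨x, mem_closedBall_self h, hx⟩
  exact this

lemma harnack [ProperSpace X] {Ω : Set X} {u : X → ℝ}
    (hpos : ∀ x ∈ Ω, 0 < u x) (hcc : CompCones Ω u) {x z : X} {ρ : ℝ}
    (hx : x ∈ Ω) (hball : closedBall x ρ ⊆ Ω) (hd : dist x z < ρ) :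
    u x * (1 - dist x z / ρ) ≤ u z := by
  have hρ : 0 < ρ := lt_of_le_of_lt dist_nonneg hd
  by_cases hzx : z = x
  · subst hzx; simp
  set O : Set X := ball x ρ ∩ {x}ᶜ with hO
  have hOopen : IsOpen O := isOpen_ball.inter isClosed_singleton.isOpen_compl
  have hOsub : closure O ⊆ closedBall x ρ :=
    (closure_mono inter_subset_left).trans closure_ball_subset_closedBall
  have hOcpt : IsCompact (closure O) :=
    (isCompact_closedBall x ρ).of_isClosed_subset isClosed_closure hOsub
  have hOΩ : closure O ⊆ Ω := hOsub.trans hball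
  have hfr : ∀ z' ∈ frontier O, u x + (-(u x)/ρ) * dist x z' ≤ u z' := by
    intro z' hz'
    rw [hOopen.frontier_eq] at hz'
    obtain ⟨hz'c, hz'O⟩ := hz'
    rcases eq_or_ne z' x with rfl | hne
    · simp
    · have hge : ρ ≤ dist x z' := by
        by_contra hlt
        exact hz'O ⟨mem_ball'.2 (lt_of_not_ge hlt), hne⟩
      have hle : dist x z' ≤ ρ := mem_closedBall'.1 (hOsub hz'c)
      have heq : dist x z' = ρ := le_antisymm hle hge
      rw [heq]
      have h0 : u x + -u x / ρ * ρ = 0 := by field_simp; ring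
      rw [h0]
      exact (hpos z' (hOΩ hz'c)).le
  have hzO : z ∈ closure O := subset_closure ⟨mem_ball'.2 hd, hzx⟩
  have hκ : -(u x)/ρ ≤ 0 :=
    div_nonpos_of_nonpos_of_nonneg (neg_nonpos.2 (hpos x hx).le) hρ.le
  have hres := hcc O hOopen hOcpt hOΩ x ⟨hx, fun h => h.2 rfl⟩ (u x) (-(u x)/ρ) hκ hfr z hzO
  have heq : u x * (1 - dist x z / ρ) = u x + (-(u x)/ρ) * dist x z := by
    field_simp; ring
  linarith [hres, heq.le]

lemma geo_continuous {γ : ℝ → X} (hiso : ∀ s t : ℝ, dist (γ s) (γ t) = |s - t|) :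
    Continuous γ :=
  (Isometry.of_dist_eq (fun s t => by rw [hiso, Real.dist_eq])).continuous

lemma exit_frontier {O : Set X} (hOopen : IsOpen O) {γ : ℝ → X} (hcont : Continuous γ)
    {L : ℝ} (hL : 0 ≤ L) (h0 : γ 0 ∈ O) (h1 : γ L ∉ O) :
    ∃ T ∈ Icc 0 L, γ T ∈ frontier O := by
  set A := {t | t ∈ Icc 0 L ∧ γ t ∉ O} with hA
  have hAc : IsClosed A := by
    have : A = Icc 0 L ∩ γ ⁻¹' Oᶜ := rfl
    rw [this]
    exact isClosed_Icc.inter (hOopen.isClosed_compl.preimage hcont)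
  have hAne : A.Nonempty := ⟨L, ⟨hL, le_rfl⟩, h1⟩
  have hAbdd : BddBelow A := ⟨0, fun t ht => ht.1.1⟩
  set T := sInf A with hT
  have hTA : T ∈ A := hAc.csInf_mem hAne hAbdd
  have hT0 : 0 ≤ T := hTA.1.1
  have hTL : T ≤ L := hTA.1.2
  have hTpos : 0 < T := by
    rcases hT0.lt_or_eq with h | h
    · exact h
    · exact absurd (h ▸ hTA.2) (fun hh => hh h0)
  have hsub : γ '' Ico 0 T ⊆ O := by
    rintro _ ⟨t, ⟨ht0, htT⟩, rfl⟩
    by_contra hO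
    exact absurd htT (not_lt.2 (csInf_le hAbdd ⟨⟨ht0, htT.le.trans hTL⟩, hO⟩))
  have hclos : γ T ∈ closure O := by
    have h1 : T ∈ closure (Ico (0:ℝ) T) := by
      rw [closure_Ico (ne_of_lt hTpos)]
      exact ⟨hT0, le_rfl⟩
    have := image_closure_subset_closure_image hcont (s := Ico (0:ℝ) T) ⟨T, h1, rfl⟩
    exact closure_mono hsub this
  exact ⟨T, ⟨hT0, hTL⟩, by rw [hOopen.frontier_eq]; exact ⟨hclos, hTA.2⟩⟩

lemma w_compcones [ProperSpace X] (hgeo : IsGeodesicSpace X) {Ω : Set X} (hΩo : IsOpen Ω)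
    (hfne : (frontier Ω).Nonempty) {Λ : ℝ} (hΛ : 0 ≤ Λ) :
    CompCones Ω (fun z => Λ * infDist z (frontier Ω)) := by
  intro O hOopen hOcpt hOΩ xhat hxhat a κ hκ hbd z hz
  rcases em (z ∈ O) with hzO | hzO
  swap
  · exact hbd z (by rw [hOopen.frontier_eq]; exact ⟨hz, hzO⟩)
  have hnotin : ∀ y ∈ frontier Ω, y ∉ O := by
    intro y hy hyO
    have : y ∈ Ω := hOΩ (subset_closure hyO)
    rw [hΩo.frontier_eq] at hy
    exact hy.2 this
  rcases le_or_gt 0 (Λ + κ) with hcase | hcase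
  · obtain ⟨p, hpF, hpd⟩ := isClosed_frontier.exists_infDist_eq_dist hfne z
    obtain ⟨γ, h0, h1, hiso⟩ := hgeo z p
    set L := dist z p with hLdef
    obtain ⟨T, ⟨hT0, hTL⟩, hTfr⟩ := exit_frontier hOopen (geo_continuous hiso)
      dist_nonneg (h0 ▸ hzO) (h1 ▸ hnotin p hpF)
    have hb := hbd (γ T) hTfr
    simp only at hb ⊢
    have hdz : dist z (γ T) = T := by
      rw [← h0, dist_comm, hiso]; simpa using abs_of_nonneg hT0
    have hdp : dist (γ T) p = L - T := by
      rw [← h1, hiso]; rw [abs_of_nonpos (by linarith)]; ring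
    have hiγ : infDist (γ T) (frontier Ω) ≤ L - T :=
      hdp ▸ infDist_le_dist_of_mem hpF
    have htri : dist xhat (γ T) ≤ dist xhat z + T := by
      calc dist xhat (γ T) ≤ dist xhat z + dist z (γ T) := dist_triangle _ _ _
      _ = dist xhat z + T := by rw [hdz]
    have hmul : κ * (dist xhat z + T) ≤ κ * dist xhat (γ T) :=
      mul_le_mul_of_nonpos_left htri hκ
    have hmul2 : Λ * infDist (γ T) (frontier Ω) ≤ Λ * (L - T) :=
      mul_le_mul_of_nonneg_left hiγ hΛ
    have hmul3 : 0 ≤ (Λ + κ) * T := mul_nonneg hcase hT0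
    have hgoal : infDist z (frontier Ω) = L := hpd
    rw [hgoal]
    nlinarith [hb, hmul, hmul2, hmul3]
  · obtain ⟨γ, h0, h1, hiso⟩ := hgeo z xhat
    set L := dist z xhat with hLdef
    obtain ⟨T, ⟨hT0, hTL⟩, hTfr⟩ := exit_frontier hOopen (geo_continuous hiso)
      dist_nonneg (h0 ▸ hzO) (h1 ▸ hxhat.2)
    have hb := hbd (γ T) hTfr
    simp only at hb ⊢
    have hdz : dist z (γ T) = T := by
      rw [← h0, dist_comm, hiso]; simpa using abs_of_nonneg hT0
    have hdx : dist xhat (γ T) = L - T := by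
      rw [← h1, dist_comm, hiso]; rw [abs_of_nonpos (by linarith)]; ring
    have hiγ1 : infDist (γ T) (frontier Ω) ≤ infDist z (frontier Ω) + T := by
      have := infDist_le_infDist_add_dist (x := γ T) (y := z) (s := frontier Ω)
      rwa [dist_comm, hdz] at this
    have hmul2 : Λ * infDist (γ T) (frontier Ω) ≤ Λ * (infDist z (frontier Ω) + T) :=
      mul_le_mul_of_nonneg_left hiγ1 hΛ
    have hmul3 : (Λ + κ) * T ≤ 0 := mul_nonpos_of_nonpos_of_nonneg hcase.le hT0
    rw [hdx] at hb
    rw [dist_comm xhat z]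
    nlinarith [hb, hmul2, hmul3]

lemma geo_dist_eq (hgeo : IsGeodesicSpace X) (x : X) {r : ℝ} (hr : 0 ≤ r) :
    ∃ y : X, dist x y = r := by
  obtain ⟨γ, h0, -, hiso⟩ := hgeo x x
  exact ⟨γ r, by rw [← h0, hiso]; simpa using abs_of_nonneg hr⟩

lemma frequently_of_forall_rad {x : X} {Q : X → Prop}
    (h : ∀ ε > 0, ∃ y, y ≠ x ∧ dist y x < ε ∧ Q y) : ∃ᶠ y in 𝓝[≠] x, Q y := by
  rw [Filter.frequently_iff]
  intro U hU
  rw [mem_nhdsWithin] at hU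
  obtain ⟨V, hVo, hxV, hVU⟩ := hU
  obtain ⟨ε, hε, hball⟩ := Metric.isOpen_iff.1 hVo x hxV
  obtain ⟨y, hyx, hyd, hQ⟩ := h ε hε
  exact ⟨y, hVU ⟨hball (by rwa [mem_ball]), Set.mem_compl_singleton_iff.mpr hyx⟩, hQ⟩

lemma nebot_punctured (hgeo : IsGeodesicSpace X) (x : X) : (𝓝[≠] x).NeBot := by
  refine (Filter.frequently_true_iff_neBot _).1 (frequently_of_forall_rad (fun ε hε => ?_))
  obtain ⟨y, hy⟩ := geo_dist_eq hgeo x (le_of_lt (half_pos hε))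
  refine ⟨y, ?_, ?_, trivial⟩
  · intro h; rw [h, dist_self] at hy; linarith
  · rw [dist_comm, hy]; linarith

lemma quot_le {u : X → ℝ} {x y : X} {C : ℝ} (hC : 0 ≤ C) (hxy : y ≠ x)
    (h : u x - u y ≤ C * dist x y) : max (u x - u y) 0 / dist x y ≤ C := by
  have hd : 0 < dist x y := dist_pos.2 (Ne.symm hxy)
  rw [div_le_iff₀ hd]
  exact max_le h (by positivity)

lemma le_quot {u : X → ℝ} {x y : X} {c : ℝ} (hxy : y ≠ x)
    (h : c * dist x y ≤ u x - u y) : c ≤ max (u x - u y) 0 / dist x y := by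
  have hd : 0 < dist x y := dist_pos.2 (Ne.symm hxy)
  rw [le_div_iff₀ hd]
  exact h.trans (le_max_left _ _)

lemma cone_from_center [ProperSpace X] {Ω : Set X} {u : X → ℝ}
    (hcc : CompCones Ω u) {x : X} {r κ : ℝ}
    (hx : x ∈ Ω) (hball : closedBall x r ⊆ Ω) (hκ : κ ≤ 0)
    (hsph : ∀ y, dist x y = r → u x + κ * r ≤ u y) :
    ∀ y, dist x y < r → u x + κ * dist x y ≤ u y := by
  intro z hd
  have hρ : 0 < r := lt_of_le_of_lt dist_nonneg hd
  by_cases hzx : z = x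
  · subst hzx; simp
  set O : Set X := ball x r ∩ {x}ᶜ with hO
  have hOopen : IsOpen O := isOpen_ball.inter isClosed_singleton.isOpen_compl
  have hOsub : closure O ⊆ closedBall x r :=
    (closure_mono inter_subset_left).trans closure_ball_subset_closedBall
  have hOcpt : IsCompact (closure O) :=
    (isCompact_closedBall x r).of_isClosed_subset isClosed_closure hOsub
  have hOΩ : closure O ⊆ Ω := hOsub.trans hball
  have hfr : ∀ z' ∈ frontier O, u x + κ * dist x z' ≤ u z' := by
    intro z' hz'
    rw [hOopen.frontier_eq] at hz'
    obtain ⟨hz'c, hz'O⟩ := hz'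
    rcases eq_or_ne z' x with rfl | hne
    · simp
    · have hge : r ≤ dist x z' := by
        by_contra hlt
        exact hz'O ⟨mem_ball'.2 (lt_of_not_ge hlt), hne⟩
      have hle : dist x z' ≤ r := mem_closedBall'.1 (hOsub hz'c)
      have heq : dist x z' = r := le_antisymm hle hge
      rw [heq]
      exact hsph z' heq
  have hzO : z ∈ closure O := subset_closure ⟨mem_ball'.2 hd, hzx⟩
  exact hcc O hOopen hOcpt hOΩ x ⟨hx, fun h => h.2 rfl⟩ (u x) κ hκ hfr z hzO

lemma sphere_min [ProperSpace X] (hgeo : IsGeodesicSpace X) {Ω : Set X} {u : X → ℝ} {Λ : ℝ}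
    (hΛpos : 0 < Λ) (hcc : CompCones Ω u)
    (hcont : ContinuousOn u (closure Ω)) {x : X} {r : ℝ}
    (hx : x ∈ Ω) (hxsub : Λ * u x ≤ mSubslope u x) (hxpos : 0 < u x)
    (hr : 0 < r) (hball : closedBall x r ⊆ Ω) :
    ∃ y, dist x y = r ∧ u y ≤ u x * (1 - Λ * r) := by
  haveI := nebot_punctured hgeo x
  obtain ⟨y1, hy1⟩ := geo_dist_eq hgeo x hr.le
  have hKne : (sphere x r).Nonempty := ⟨y1, by rwa [mem_sphere, dist_comm]⟩
  have hKsub : sphere x r ⊆ closure Ω :=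
    (sphere_subset_closedBall.trans hball).trans subset_closure
  obtain ⟨y0, hy0K, hy0min⟩ := (isCompact_sphere x r).exists_isMinOn hKne
    (hcont.mono hKsub)
  set m := u y0 with hm
  set κ : ℝ := min ((m - u x)/r) 0 with hκdef
  have hκ : κ ≤ 0 := min_le_right _ _
  have hsph : ∀ y, dist x y = r → u x + κ * r ≤ u y := by
    intro y hy
    have hymem : y ∈ sphere x r := by rwa [mem_sphere, dist_comm]
    have h1 : m ≤ u y := hy0min hymem
    have h2 : κ * r ≤ m - u x := by
      have : κ ≤ (m - u x)/r := min_le_left _ _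
      calc κ * r ≤ (m - u x)/r * r := by nlinarith
      _ = m - u x := by field_simp
    linarith
  have hcone := cone_from_center hcc hx hball hκ hsph
  have hev : ∀ᶠ y in 𝓝[≠] x, max (u x - u y) 0 / dist x y ≤ -κ := by
    have hmem : (ball x r ∩ {x}ᶜ : Set X) ∈ 𝓝[≠] x :=
      Filter.inter_mem (mem_nhdsWithin_of_mem_nhds (ball_mem_nhds x hr)) self_mem_nhdsWithin
    refine Filter.eventually_of_mem hmem (fun y hy => ?_)
    refine quot_le (by linarith) hy.2 ?_
    have := hcone y (mem_ball'.1 hy.1)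
    linarith
  have hlimsup : mSubslope u x ≤ -κ := by
    apply Filter.limsup_le_of_le ?_ hev
    exact Filter.isCoboundedUnder_le_of_le _ (fun y => by positivity)
  have hκval : (m - u x)/r ≤ -(Λ * u x) := by
    have h1 : Λ * u x ≤ -κ := le_trans hxsub hlimsup
    have h2 : κ ≤ -(Λ * u x) := by linarith
    rcases min_cases ((m - u x)/r) 0 with ⟨heq, -⟩ | ⟨heq, hle⟩
    · rw [hκdef] at h2; rw [heq] at h2; exact h2
    · exfalso; rw [hκdef] at h2; rw [heq] at h2; nlinarith
  refine ⟨y0, by rw [dist_comm]; exact hy0K, ?_⟩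
  have : m - u x ≤ -(Λ * u x) * r := by
    calc m - u x = (m - u x)/r * r := by field_simp
    _ ≤ -(Λ * u x) * r := by nlinarith
  nlinarith

lemma w_subslope [ProperSpace X] (hgeo : IsGeodesicSpace X) {Ω : Set X}
    (hfne : (frontier Ω).Nonempty) {Λ : ℝ} (hΛ : 0 ≤ Λ) {x : X}
    (hx : 0 < infDist x (frontier Ω)) :
    Λ ≤ mSubslope (fun z => Λ * infDist z (frontier Ω)) x := by
  haveI := nebot_punctured hgeo x
  obtain ⟨p, hpF, hpd⟩ := isClosed_frontier.exists_infDist_eq_dist hfne x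
  set w : X → ℝ := fun z => Λ * infDist z (frontier Ω) with hw
  have hbdd : Filter.IsBoundedUnder (· ≤ ·) (𝓝[≠] x)
      (fun y => max (w x - w y) 0 / dist x y) := by
    refine ⟨Λ, ?_⟩
    rw [Filter.eventually_map]
    refine Filter.eventually_of_mem self_mem_nhdsWithin (fun y hy => ?_)
    refine quot_le hΛ hy ?_
    have h1 : infDist x (frontier Ω) ≤ infDist y (frontier Ω) + dist x y :=
      infDist_le_infDist_add_dist
    simp only [hw]
    nlinarith [mul_nonneg hΛ (by linarith :
      0 ≤ infDist y (frontier Ω) + dist x y - infDist x (frontier Ω))]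
  refine Filter.le_limsup_of_frequently_le ?_ hbdd
  apply frequently_of_forall_rad
  intro ε hε
  obtain ⟨γ, h0, h1, hiso⟩ := hgeo x p
  set r := min (ε/2) (infDist x (frontier Ω)) with hrdef
  have hrpos : 0 < r := lt_min (by linarith) hx
  have hrd : r ≤ dist x p := by rw [← hpd]; exact min_le_right _ _
  set y := γ r with hy
  have hdxy : dist x y = r := by
    rw [hy, ← h0, hiso]; simp [abs_of_nonneg hrpos.le]
  have hdyp : dist y p = dist x p - r := by
    have h2 := hiso r (dist x p)
    rw [h1] at h2
    rw [hy, h2, abs_of_nonpos (by linarith)]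
    ring
  have hyne : y ≠ x := by intro h; rw [h, dist_self] at hdxy; linarith
  have hylt : dist y x < ε := by
    rw [dist_comm, hdxy]
    exact lt_of_le_of_lt (min_le_left _ _) (by linarith)
  refine ⟨y, hyne, hylt, ?_⟩
  refine le_quot hyne ?_
  have hiy : infDist y (frontier Ω) ≤ dist x p - r := hdyp ▸ infDist_le_dist_of_mem hpF
  simp only [hw]
  rw [hdxy, hpd]
  nlinarith [mul_nonneg hΛ (by linarith : 0 ≤ dist x p - r - infDist y (frontier Ω))]

end helpers

theorem stmt19 {X : Type*} [MetricSpace X] [ProperSpace X] (hgeo : IsGeodesicSpace X)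
    (Ω : Set X) (hΩo : IsOpen Ω) (hΩc : IsConnected Ω) (hΩb : Bornology.IsBounded Ω)
    (hΩne : Ω ≠ Set.univ)
    (R Λ : ℝ)
    (hR : R = sSup ((fun x => Metric.infDist x (frontier Ω)) '' closure Ω))
    (hΛ : Λ = 1 / R)
    (M : Set X) (hM : M = {x ∈ Ω | Metric.infDist x (frontier Ω) = R})
    (S : Set (X → ℝ))
    (hS : S = {u : X → ℝ | LocLipOn Ω u ∧ (∀ x ∈ Ω, 0 < u x) ∧
      ContinuousOn u (closure Ω) ∧ CompCones Ω u ∧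
      (∀ x ∈ Ω, Λ * u x ≤ mSubslope u x) ∧
      (∀ x ∈ M, u x = 1) ∧ (∀ x ∈ closure Ω, u x ≤ 1)})
    (u_inf : X → ℝ) (hu : ∀ x, u_inf x = sInf ((fun u : X → ℝ => u x) '' S)) :
    ContinuousOn u_inf (closure Ω) ∧
      (∀ x ∈ Ω, 0 < u_inf x ∧ u_inf x ≤ Λ * Metric.infDist x (frontier Ω)) ∧
      (∀ x ∈ frontier Ω, u_inf x = 0) ∧
      (∀ x ∈ M, u_inf x = 1) ∧
      CompCones Ω u_inf ∧
      (∀ x ∈ Ω, Λ * u_inf x ≤ mSubslope u_inf x) := by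
  classical
  obtain ⟨x0, hx0⟩ := hΩc.nonempty
  -- X is preconnected
  haveI : PreconnectedSpace X := ⟨by
    apply isPreconnected_of_forall x0
    intro y _
    obtain ⟨γ, h0, h1, hiso⟩ := hgeo x0 y
    exact ⟨γ '' Set.Icc 0 (dist x0 y), Set.subset_univ _, ⟨0, ⟨le_rfl, dist_nonneg⟩, h0⟩,
      ⟨dist x0 y, ⟨dist_nonneg, le_rfl⟩, h1⟩,
      isPreconnected_Icc.image γ
        ((Isometry.of_dist_eq (fun s t => by rw [hiso, Real.dist_eq])).continuous).continuousOn⟩⟩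
  have hclcpt : IsCompact (closure Ω) := hΩb.isCompact_closure
  have hfne : (frontier Ω).Nonempty := by
    rcases Set.eq_empty_or_nonempty (frontier Ω) with h | h
    · exfalso
      have hclopen : IsClopen Ω := by
        constructor
        · rw [← closure_eq_iff_isClosed, closure_eq_self_union_frontier, h,
            Set.union_empty]
        · exact hΩo
      rcases isClopen_iff.mp hclopen with h' | h'
      · exact absurd (h' ▸ hx0) (Set.notMem_empty x0)
      · exact hΩne h'
    · exact h
  have hΩpos : ∀ x ∈ Ω, 0 < Metric.infDist x (frontier Ω) := by
    intro x hx
    refine (isClosed_frontier.notMem_iff_infDist_pos hfne).1 ?_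
    intro hxF
    rw [hΩo.frontier_eq] at hxF
    exact hxF.2 hx
  have hbddA : BddAbove ((fun x => Metric.infDist x (frontier Ω)) '' closure Ω) :=
    (hclcpt.image (Metric.continuous_infDist_pt (frontier Ω))).bddAbove
  have hle_R : ∀ x ∈ closure Ω, Metric.infDist x (frontier Ω) ≤ R := by
    intro x hx
    rw [hR]
    exact le_csSup hbddA ⟨x, hx, rfl⟩
  have hRpos : 0 < R := lt_of_lt_of_le (hΩpos x0 hx0) (hle_R x0 (subset_closure hx0))
  have hΛpos : 0 < Λ := by rw [hΛ]; positivity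
  have hΛR : Λ * R = 1 := by rw [hΛ]; field_simp
  -- the high ridge is nonempty
  obtain ⟨xh, hxhcl, hxhmax⟩ := hclcpt.exists_isMaxOn ⟨x0, subset_closure hx0⟩
    (Metric.continuous_infDist_pt (frontier Ω)).continuousOn
  have hxhR : Metric.infDist xh (frontier Ω) = R := by
    refine le_antisymm (hle_R xh hxhcl) ?_
    rw [hR]
    exact csSup_le ⟨_, ⟨x0, subset_closure hx0, rfl⟩⟩ (by rintro _ ⟨y, hy, rfl⟩; exact hxhmax hy)
  have hxhΩ : xh ∈ Ω := by
    by_contra hxx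
    have hxF : xh ∈ (frontier Ω) := by rw [hΩo.frontier_eq]; exact ⟨hxhcl, hxx⟩
    rw [Metric.infDist_zero_of_mem hxF] at hxhR
    exact hRpos.ne hxhR
  have hxhM : xh ∈ M := by rw [hM]; exact ⟨hxhΩ, hxhR⟩
  -- the explicit member w
  set w : X → ℝ := fun z => Λ * Metric.infDist z (frontier Ω) with hw
  have hwlip : LipschitzWith (Real.toNNReal Λ) w := by
    apply LipschitzWith.of_dist_le_mul
    intro a b
    rw [Real.coe_toNNReal _ hΛpos.le, Real.dist_eq]
    have h1 : Metric.infDist a (frontier Ω) ≤ Metric.infDist b (frontier Ω) + dist a b :=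
      Metric.infDist_le_infDist_add_dist
    have h2 : Metric.infDist b (frontier Ω) ≤ Metric.infDist a (frontier Ω) + dist b a :=
      Metric.infDist_le_infDist_add_dist
    rw [dist_comm b a] at h2
    have hgoal : |Λ * Metric.infDist a (frontier Ω) - Λ * Metric.infDist b (frontier Ω)|
        ≤ Λ * dist a b := by
      rw [abs_le]
      constructor <;>
        nlinarith [mul_nonneg hΛpos.le (by linarith : (0:ℝ) ≤ Metric.infDist b (frontier Ω)
            + dist a b - Metric.infDist a (frontier Ω)),
          mul_nonneg hΛpos.le (by linarith : (0:ℝ) ≤ Metric.infDist a (frontier Ω)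
            + dist a b - Metric.infDist b (frontier Ω))]
    exact hgoal
  have hw1 : ∀ y ∈ closure Ω, w y ≤ 1 := by
    intro y hy
    calc w y ≤ Λ * R := mul_le_mul_of_nonneg_left (hle_R y hy) hΛpos.le
    _ = 1 := hΛR
  have hwS : w ∈ S := by
    rw [hS]
    refine ⟨?_, ?_, ?_, ?_, ?_, ?_, hw1⟩
    · intro x hx
      exact ⟨Real.toNNReal Λ, Set.univ, Filter.univ_mem, hwlip.lipschitzOnWith⟩
    · intro x hx
      exact mul_pos hΛpos (hΩpos x hx)
    · exact hwlip.continuous.continuousOn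
    · exact w_compcones hgeo hΩo hfne hΛpos.le
    · intro x hx
      have h1 : Λ ≤ mSubslope w x := w_subslope hgeo hfne hΛpos.le (hΩpos x hx)
      have h2 : w x ≤ 1 := hw1 x (subset_closure hx)
      nlinarith [mul_nonneg hΛpos.le (sub_nonneg.2 h2)]
    · intro x hx
      rw [hM] at hx
      simp only [hw]
      rw [hx.2, hΛR]
  have hSne : S.Nonempty := ⟨w, hwS⟩
  have hmem : ∀ u ∈ S, LocLipOn Ω u ∧ (∀ x ∈ Ω, 0 < u x) ∧
      ContinuousOn u (closure Ω) ∧ CompCones Ω u ∧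
      (∀ x ∈ Ω, Λ * u x ≤ mSubslope u x) ∧
      (∀ x ∈ M, u x = 1) ∧ (∀ x ∈ closure Ω, u x ≤ 1) := by
    intro u huS; rw [hS] at huS; exact huS
  -- nonnegativity on the closure
  have hnn : ∀ u ∈ S, ∀ y ∈ closure Ω, 0 ≤ u y := by
    intro u huS y hy
    obtain ⟨-, hpos, hcont, -⟩ := hmem u huS
    haveI hne : (𝓝[Ω] y).NeBot := mem_closure_iff_nhdsWithin_neBot.1 hy
    have htend : Filter.Tendsto u (𝓝[Ω] y) (𝓝 (u y)) :=
      (hcont y hy).mono_left (nhdsWithin_mono y subset_closure)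
    exact ge_of_tendsto htend (Filter.eventually_of_mem self_mem_nhdsWithin
      (fun z hz => (hpos z hz).le))
  have hbdd : ∀ y ∈ closure Ω, BddBelow ((fun u : X → ℝ => u y) '' S) := by
    intro y hy
    exact ⟨0, by rintro _ ⟨u, huS, rfl⟩; exact hnn u huS y hy⟩
  have hle : ∀ u ∈ S, ∀ y ∈ closure Ω, u_inf y ≤ u y := by
    intro u huS y hy
    rw [hu y]
    exact csInf_le (hbdd y hy) ⟨u, huS, rfl⟩
  have hlb : ∀ (y : X) (c : ℝ), (∀ u ∈ S, c ≤ u y) → c ≤ u_inf y := by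
    intro y c h
    rw [hu y]
    exact le_csInf (hSne.image _) (by rintro _ ⟨u, huS, rfl⟩; exact h u huS)
  have hnn_inf : ∀ y ∈ closure Ω, 0 ≤ u_inf y :=
    fun y hy => hlb y 0 (fun u huS => hnn u huS y hy)
  have hle_w : ∀ y ∈ closure Ω, u_inf y ≤ w y := fun y hy => hle w hwS y hy
  -- uniform interior Lipschitz estimate
  have hlip : ∀ u ∈ S, ∀ δ : ℝ, 0 < δ → ∀ x ∈ Ω, δ ≤ Metric.infDist x (frontier Ω) → ∀ z ∈ Ω,
      u x - u z ≤ 2/δ * dist x z := by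
    intro u huS δ hδ x hx hxδ z hz
    obtain ⟨-, hpos, hcont, hcc, -, -, hle1⟩ := hmem u huS
    have hux1 : u x ≤ 1 := hle1 x (subset_closure hx)
    have hux0 : 0 ≤ u x := (hpos x hx).le
    rcases lt_or_ge (dist x z) (δ/2) with hd | hd
    · set ρ := (dist x z + δ)/2 with hρdef
      have hρpos : 0 < ρ := by have := dist_nonneg (x := x) (y := z); simp only [hρdef]; linarith
      have hρlt : ρ < Metric.infDist x (frontier Ω) := by
        simp only [hρdef]; have := dist_nonneg (x := x) (y := z); linarith
      have hball : Metric.closedBall x ρ ⊆ Ω := cb_subset hgeo hΩo hx hρlt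
      have hh := harnack hpos hcc hx hball (by simp only [hρdef]; linarith)
      set q := dist x z / ρ with hq
      have hq0 : 0 ≤ q := by positivity
      have hqle : q ≤ 2/δ * dist x z := by
        rw [hq, div_le_iff₀ hρpos]
        have he : 2/δ * dist x z * ρ = dist x z * (dist x z + δ) / δ := by
          rw [hρdef]; field_simp
        rw [he, le_div_iff₀ hδ]
        nlinarith [sq_nonneg (dist x z), dist_nonneg (x := x) (y := z)]
      have hint : 0 ≤ (1 - u x) * q := mul_nonneg (by linarith) hq0
      nlinarith [hh]
    · have h1 : (1:ℝ) ≤ 2/δ * dist x z := by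
        have h2 : 2/δ * (δ/2) ≤ 2/δ * dist x z :=
          mul_le_mul_of_nonneg_left hd (by positivity)
        have h3 : 2/δ * (δ/2) = 1 := by field_simp
        linarith
      have huz0 : 0 ≤ u z := (hpos z hz).le
      linarith
  have hlip_inf : ∀ δ : ℝ, 0 < δ → ∀ x ∈ Ω, δ ≤ Metric.infDist x (frontier Ω) → ∀ z ∈ Ω,
      u_inf x - u_inf z ≤ 2/δ * dist x z := by
    intro δ hδ x hx hxδ z hz
    have h : ∀ u ∈ S, u_inf x - 2/δ * dist x z ≤ u z := by
      intro u huS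
      have h1 := hle u huS x (subset_closure hx)
      have h2 := hlip u huS δ hδ x hx hxδ z hz
      linarith
    have := hlb z _ h
    linarith
  -- positivity of the infimum
  have hposinf : ∀ x ∈ Ω, 0 < u_inf x := by
    set A : Set X := {z | z ∈ Ω ∧ ∃ c : ℝ, 0 < c ∧ ∀ u ∈ S, c ≤ u z} with hA
    have hharn : ∀ u ∈ S, ∀ a ∈ Ω, ∀ z : X, ∀ ρ : ℝ, Metric.closedBall a ρ ⊆ Ω →
        dist a z < ρ → u a * (1 - dist a z / ρ) ≤ u z := by
      intro u huS a ha z ρ h1 h2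
      obtain ⟨-, hpos, -, hcc, -⟩ := hmem u huS
      exact harnack hpos hcc ha h1 h2
    have hstep : ∀ a ∈ A, ∀ y : X, dist a y < Metric.infDist a (frontier Ω) / 4 → y ∈ A := by
      rintro a ⟨haΩ, c, hc, hcu⟩ y hy
      have hra : 0 < Metric.infDist a (frontier Ω) := hΩpos a haΩ
      set ρ := Metric.infDist a (frontier Ω) / 2 with hρ
      have hball : Metric.closedBall a ρ ⊆ Ω := cb_subset hgeo hΩo haΩ (by rw [hρ]; linarith)
      have hyΩ : y ∈ Ω := hball (Metric.mem_closedBall.2 (by rw [dist_comm, hρ]; linarith))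
      refine ⟨hyΩ, c/2, by linarith, ?_⟩
      intro u huS
      have hh := hharn u huS a haΩ y ρ hball (by rw [hρ]; linarith)
      have hqle : dist a y / ρ ≤ 1/2 := by
        rw [div_le_iff₀ (by rw [hρ]; linarith)]
        rw [hρ]; linarith
      have hua : c ≤ u a := hcu u huS
      have h12 : (1:ℝ)/2 ≤ 1 - dist a y / ρ := by linarith
      have := mul_le_mul hua h12 (by norm_num) (by linarith)
      linarith [hh, this]
    have hAopen : IsOpen A := by
      rw [Metric.isOpen_iff]
      intro a haA
      exact ⟨Metric.infDist a (frontier Ω) / 4, by have := hΩpos a haA.1; linarith,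
        fun y hy => hstep a haA y (by rw [dist_comm]; exact Metric.mem_ball.1 hy)⟩
    have hsub : Ω ⊆ A ∪ (closure A)ᶜ := by
      intro z hz
      by_cases hzA : z ∈ closure A
      · left
        have hrz : 0 < Metric.infDist z (frontier Ω) := hΩpos z hz
        obtain ⟨a, haA, had⟩ := Metric.mem_closure_iff.1 hzA (Metric.infDist z (frontier Ω) / 8)
          (by linarith)
        have hra : Metric.infDist z (frontier Ω) - Metric.infDist z (frontier Ω) / 8 ≤ Metric.infDist a (frontier Ω) := by
          have h2 := Metric.infDist_le_infDist_add_dist (x := z) (y := a) (s := (frontier Ω))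
          linarith
        refine hstep a haA z ?_
        rw [dist_comm]
        calc dist z a < Metric.infDist z (frontier Ω) / 8 := had
        _ ≤ Metric.infDist a (frontier Ω) / 4 := by linarith
      · right; exact hzA
    have hΩA : Ω ⊆ A := by
      refine hΩc.isPreconnected.subset_left_of_subset_union hAopen
        isClosed_closure.isOpen_compl
        (disjoint_compl_right.mono_left subset_closure) hsub ?_
      refine ⟨xh, hxhΩ, ⟨hxhΩ, 1, one_pos, ?_⟩⟩
      intro u huS
      exact ((hmem u huS).2.2.2.2.2.1 xh hxhM).ge
    intro x hx
    obtain ⟨-, c, hc, hcu⟩ := hΩA hx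
    exact lt_of_lt_of_le hc (hlb x c (fun u huS => hcu u huS))
  -- continuity
  have hcont_inf : ContinuousOn u_inf (closure Ω) := by
    intro x hxcl
    by_cases hxΩ : x ∈ Ω
    · have hrx : 0 < Metric.infDist x (frontier Ω) := hΩpos x hxΩ
      set δ := Metric.infDist x (frontier Ω) / 2 with hδ
      set s : Set X := Ω ∩ {y | δ ≤ Metric.infDist y (frontier Ω)} with hsdef
      have hlips : LipschitzOnWith (Real.toNNReal (2/δ)) u_inf s := by
        apply LipschitzOnWith.of_dist_le_mul
        rintro a ⟨haΩ, haδ⟩ b ⟨hbΩ, hbδ⟩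
        rw [Real.coe_toNNReal _ (by positivity), Real.dist_eq, abs_le]
        have h1 := hlip_inf δ (by positivity) a haΩ haδ b hbΩ
        have h2 := hlip_inf δ (by positivity) b hbΩ hbδ a haΩ
        rw [dist_comm b a] at h2
        constructor <;> linarith
      have hmem2 : s ∈ 𝓝 x := by
        have hopen : IsOpen (Ω ∩ {y | δ < Metric.infDist y (frontier Ω)}) :=
          hΩo.inter (isOpen_lt continuous_const (Metric.continuous_infDist_pt (frontier Ω)))
        refine Filter.mem_of_superset (hopen.mem_nhds ⟨hxΩ, ?_⟩) ?_
        · simp only [Set.mem_setOf_eq, hδ]; linarith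
        · exact Set.inter_subset_inter_right _ (fun y hy => show δ ≤ Metric.infDist y (frontier Ω) from le_of_lt hy)
      exact ((hlips.continuousOn).continuousAt hmem2).continuousWithinAt
    · have hxF : x ∈ (frontier Ω) := by rw [hΩo.frontier_eq]; exact ⟨hxcl, hxΩ⟩
      have h0 : u_inf x = 0 := by
        refine le_antisymm ?_ (hnn_inf x hxcl)
        have h1 := hle_w x hxcl
        have h2 : w x = 0 := by
          simp only [hw]; rw [Metric.infDist_zero_of_mem hxF, mul_zero]
        rwa [h2] at h1
      show Filter.Tendsto u_inf (𝓝[closure Ω] x) (𝓝 (u_inf x))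
      rw [h0]
      refine tendsto_of_tendsto_of_tendsto_of_le_of_le' (g := fun _ => (0:ℝ)) (h := w)
        tendsto_const_nhds ?_ ?_ ?_
      · have : Filter.Tendsto w (𝓝 x) (𝓝 (w x)) :=
          (hwlip.continuous.tendsto x)
        have hwx : w x = 0 := by
          simp only [hw]; rw [Metric.infDist_zero_of_mem hxF, mul_zero]
        rw [hwx] at this
        exact this.mono_left nhdsWithin_le_nhds
      · exact Filter.eventually_of_mem self_mem_nhdsWithin (fun y hy => hnn_inf y hy)
      · exact Filter.eventually_of_mem self_mem_nhdsWithin (fun y hy => hle_w y hy)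
  refine ⟨hcont_inf, ?_, ?_, ?_, ?_, ?_⟩
  · intro x hx
    exact ⟨hposinf x hx, hle_w x (subset_closure hx)⟩
  · intro x hxF
    have hxcl : x ∈ closure Ω := frontier_subset_closure hxF
    refine le_antisymm ?_ (hnn_inf x hxcl)
    have h1 := hle_w x hxcl
    have h2 : w x = 0 := by
      simp only [hw]; rw [Metric.infDist_zero_of_mem hxF, mul_zero]
    rwa [h2] at h1
  · intro x hxM
    have hxΩ : x ∈ Ω := by rw [hM] at hxM; exact hxM.1
    refine le_antisymm ?_ (hlb x 1 (fun u huS => ((hmem u huS).2.2.2.2.2.1 x hxM).ge))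
    have h1 := hle_w x (subset_closure hxΩ)
    rw [hM] at hxM
    have h2 : w x = 1 := by simp only [hw]; rw [hxM.2, hΛR]
    rwa [h2] at h1
  · -- CompCones
    intro O hOo hOc hOΩ xhat hxhat a κ hκ hbd z hz
    have hzΩ : z ∈ Ω := hOΩ hz
    refine hlb z _ ?_
    intro u huS
    refine (hmem u huS).2.2.2.1 O hOo hOc hOΩ xhat hxhat a κ hκ ?_ z hz
    intro z' hz'
    have hz'cl : z' ∈ closure Ω :=
      subset_closure (hOΩ (frontier_subset_closure hz'))
    exact (hbd z' hz').trans (hle u huS z' hz'cl)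
  · -- subslope
    intro x hx
    haveI := nebot_punctured hgeo x
    have hrx : 0 < Metric.infDist x (frontier Ω) := hΩpos x hx
    have hbddU : Filter.IsBoundedUnder (· ≤ ·) (𝓝[≠] x)
        (fun y => max (u_inf x - u_inf y) 0 / dist x y) := by
      refine ⟨4 / Metric.infDist x (frontier Ω), ?_⟩
      rw [Filter.eventually_map]
      have hballm : (Metric.ball x (Metric.infDist x (frontier Ω) / 4) ∩ {x}ᶜ : Set X) ∈ 𝓝[≠] x :=
        Filter.inter_mem (mem_nhdsWithin_of_mem_nhds
          (Metric.ball_mem_nhds x (by linarith))) self_mem_nhdsWithin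
      refine Filter.eventually_of_mem hballm (fun y hy => ?_)
      have hyΩ : y ∈ Ω := cb_subset hgeo hΩo hx (by linarith : Metric.infDist x (frontier Ω) / 4
        < Metric.infDist x (frontier Ω)) (Metric.ball_subset_closedBall hy.1)
      refine quot_le (div_nonneg (by norm_num) Metric.infDist_nonneg) hy.2 ?_
      have h1 := hlip_inf (Metric.infDist x (frontier Ω) / 2) (by linarith) x hx (by linarith) y hyΩ
      have h2 : 2 / (Metric.infDist x (frontier Ω) / 2) = 4 / Metric.infDist x (frontier Ω) := by
        field_simp; ring
      rw [h2] at h1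
      exact h1
    refine le_of_forall_sub_le ?_
    intro ε hε
    have hfr : ∃ᶠ y in 𝓝[≠] x, Λ * u_inf x - ε ≤ max (u_inf x - u_inf y) 0 / dist x y := by
      apply frequently_of_forall_rad
      intro ε' hε'
      set r := min (ε'/2) (Metric.infDist x (frontier Ω)/2) with hrdef
      have hrpos : 0 < r := lt_min (by linarith) (by linarith)
      have hrlt : r < Metric.infDist x (frontier Ω) := lt_of_le_of_lt (min_le_right _ _) (by linarith)
      have hball : Metric.closedBall x r ⊆ Ω := cb_subset hgeo hΩo hx hrlt
      have hΛr : Λ * r ≤ 1 := by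
        have hrR : r ≤ R := le_trans hrlt.le (hle_R x (subset_closure hx))
        nlinarith
      obtain ⟨_, ⟨v, hvS, rfl⟩, hvx⟩ := Real.lt_sInf_add_pos
        (hSne.image (fun u : X → ℝ => u x)) (show (0:ℝ) < ε * r by positivity)
      rw [← hu x] at hvx
      obtain ⟨-, hvpos, hvcont, hvcc, hvsub, -, -⟩ := hmem v hvS
      obtain ⟨y, hdy, hvy⟩ := sphere_min hgeo hΛpos hvcc hvcont hx (hvsub x hx)
        (hvpos x hx) hrpos hball
      have hyΩ : y ∈ Ω := hball (Metric.mem_closedBall.2 (by rw [dist_comm]; exact hdy.le))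
      have hyne : y ≠ x := by
        intro h; rw [h, dist_self] at hdy; linarith
      have hylt : dist y x < ε' := by
        rw [dist_comm, hdy]
        exact lt_of_le_of_lt (min_le_left _ _) (by linarith)
      refine ⟨y, hyne, hylt, ?_⟩
      refine le_quot hyne ?_
      rw [hdy]
      have huy : u_inf y ≤ v y := hle v hvS y (subset_closure hyΩ)
      have hux : u_inf x ≤ v x := hle v hvS x (subset_closure hx)
      have hvx0 : 0 ≤ v x := (hvpos x hx).le
      have huix0 : 0 ≤ u_inf x := hnn_inf x (subset_closure hx)
      -- u_inf y ≤ v y ≤ v x (1 - Λ r) ≤ (u_inf x + ε r)(1 - Λ r)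
      have key : u_inf y ≤ (u_inf x + ε * r) * (1 - Λ * r) := by
        have h1 : v x * (1 - Λ * r) ≤ (u_inf x + ε * r) * (1 - Λ * r) :=
          mul_le_mul_of_nonneg_right hvx.le (by linarith)
        linarith
      nlinarith [key, mul_nonneg (mul_nonneg hε.le hΛpos.le) (mul_self_nonneg r)]
    exact Filter.le_limsup_of_frequently_le hfr hbddU
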